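/- Let $Z_1, \dots, Z_N$ be i.i.d. nonnegative random variables with $\mathbb{E} e^{a Z_1} < \infty$ for some $a > 0$, where $N = r^2$ and $r \geq 1$ is an integer. Set $b = 6/a$. If $r \geq \mathbb{E} e^{a Z_1} / \log 2$, then for all $x > 0$, $\mathbb{P}\left(\sum_{l=1}^{N} Z_l \mathbf{1}\{Z_l > b \log r\} > x\right) \leq 2 e^{-\frac{a}{2} x}$. -/

import Mathlib

open MeasureTheory ProbabilityTheory Real

lemma aux_iIndepFun_ae_eq {Ω : Type*} [MeasurableSpace Ω] {μ : Measure Ω} {ι : Type*}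
    {f g : ι → Ω → ℝ} (hf : iIndepFun f μ)
    (h : ∀ i, f i =ᵐ[μ] g i) : iIndepFun g μ := by
  rw [iIndepFun_iff_measure_inter_preimage_eq_mul] at hf ⊢
  intro S sets hsets
  have hpre : ∀ i, μ (g i ⁻¹' sets i) = μ (f i ⁻¹' sets i) := by
    intro i
    refine measure_congr ?_
    filter_upwards [h i] with ω hω
    change sets i (g i ω) = sets i (f i ω)
    rw [hω]
  have hball : ∀ᵐ ω ∂μ, ∀ i ∈ S, f i ω = g i ω := by
    rw [Filter.eventually_all_finset]
    exact fun i _ => h i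
  have hint : μ (⋂ i ∈ S, g i ⁻¹' sets i) = μ (⋂ i ∈ S, f i ⁻¹' sets i) := by
    refine measure_congr ?_
    filter_upwards [hball] with ω hω
    change (ω ∈ ⋂ i ∈ S, g i ⁻¹' sets i) = (ω ∈ ⋂ i ∈ S, f i ⁻¹' sets i)
    simp only [Set.mem_iInter, Set.mem_preimage, eq_iff_iff]
    constructor
    · intro hx i hi; rw [hω i hi]; exact hx i hi
    · intro hx i hi; rw [← hω i hi]; exact hx i hi
  rw [hint, hf S hsets]
  exact Finset.prod_congr rfl fun i _ => (hpre i).symm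

/-- truncation error bound. For i.i.d. nonnegative `Z₁,…,Z_N` (`N = r²`) with
`𝔼 e^{aZ₁} < ∞`, `b = 6/a` and `r ≥ 𝔼 e^{aZ₁}/log 2`, for all `x > 0`,
`ℙ(∑ Z_l 1{Z_l > b log r} > x) ≤ 2 e^{-(a/2)x}`. -/
theorem truncation_tail_bound
    {Ω : Type*} [MeasurableSpace Ω] (P : Measure Ω) [IsProbabilityMeasure P]
    (r : ℕ) (hr : 1 ≤ r) (Z : Fin (r ^ 2) → Ω → ℝ)
    (hindep : iIndepFun Z P)
    (hid : ∀ l, Measure.map (Z l) P = Measure.map (Z ⟨0, by positivity⟩) P)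
    (hnonneg : ∀ l ω, 0 ≤ Z l ω)
    (a : ℝ) (ha : 0 < a)
    (hint : Integrable (fun ω => Real.exp (a * Z ⟨0, by positivity⟩ ω)) P)
    (hbig : (∫ ω, Real.exp (a * Z ⟨0, by positivity⟩ ω) ∂P) / Real.log 2 ≤ (r : ℝ)) :
    ∀ x : ℝ, 0 < x →
      (P {ω | x < ∑ l, Set.indicator {ω' | (6 / a) * Real.log r < Z l ω'} (Z l) ω}).toReal ≤
        2 * Real.exp (-(a / 2) * x) := by
  intro x hx
  have hN : 0 < r ^ 2 := by positivity
  set i0 : Fin (r ^ 2) := ⟨0, hN⟩ with hi0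
  have hrR : (1 : ℝ) ≤ (r : ℝ) := by exact_mod_cast hr
  have hrpos : (0 : ℝ) < (r : ℝ) := by linarith
  have hlog2 : (0 : ℝ) < Real.log 2 := Real.log_pos (by norm_num)
  set M : ℝ := ∫ ω, Real.exp (a * Z i0 ω) ∂P with hM
  have hM0 : 0 ≤ M := integral_nonneg fun ω => (Real.exp_pos _).le
  have hMr : M ≤ (r : ℝ) * Real.log 2 := by
    rw [div_le_iff₀ hlog2] at hbig; exact hbig
  -- Z i0 is AEMeasurable
  have hZ0ae : AEMeasurable (Z i0) P := by
    have h1 : AEMeasurable (fun ω => Real.exp (a * Z i0 ω)) P := hint.aemeasurable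
    have h2 : AEMeasurable (fun ω => Real.log (Real.exp (a * Z i0 ω)) / a) P :=
      (measurable_log.comp_aemeasurable h1).div_const a
    refine h2.congr (Filter.Eventually.of_forall fun ω => ?_)
    simp only [Real.log_exp]
    rw [mul_div_cancel_left₀ _ ha.ne']
  have hPmap : IsProbabilityMeasure (Measure.map (Z i0) P) :=
    Measure.isProbabilityMeasure_map hZ0ae
  have hZae : ∀ l, AEMeasurable (Z l) P := by
    intro l
    by_contra hc
    have := Measure.map_of_not_aemeasurable hc
    rw [hid l] at this
    have h1 : (Measure.map (Z i0) P) Set.univ = 1 := measure_univ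
    rw [this] at h1
    simp at h1
  -- measurable modifications
  set W : Fin (r ^ 2) → Ω → ℝ := fun l => (hZae l).mk (Z l) with hWdef
  have hWmeas : ∀ l, Measurable (W l) := fun l => (hZae l).measurable_mk
  have hWeq : ∀ l, Z l =ᵐ[P] W l := fun l => (hZae l).ae_eq_mk
  have hmapW : ∀ l, Measure.map (W l) P = Measure.map (W i0) P := by
    intro l
    rw [← Measure.map_congr (hWeq l), hid l, Measure.map_congr (hWeq i0)]
  have hindepW : iIndepFun W P := aux_iIndepFun_ae_eq hindep hWeq
  -- truncation function
  set c : ℝ := (6 / a) * Real.log r with hc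
  set φ : ℝ → ℝ := fun z => if c < z then z else 0 with hφdef
  have hφ : Measurable φ :=
    Measurable.ite (measurableSet_lt measurable_const measurable_id) measurable_id
      measurable_const
  set Y : Fin (r ^ 2) → Ω → ℝ := fun l => φ ∘ W l with hYdef
  have hYmeas : ∀ l, Measurable (Y l) := fun l => hφ.comp (hWmeas l)
  have hindepY : iIndepFun Y P :=
    hindepW.comp (fun _ => φ) (fun _ => hφ)
  -- pointwise key bound
  set ε : ℝ := (((r : ℝ)) ^ 3)⁻¹ with hεdef
  have hε0 : 0 ≤ ε := by positivity
  have hεexp : Real.exp (-(a / 2) * c) = ε := by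
    have h1 : -(a / 2) * c = Real.log ((((r : ℝ)) ^ 3)⁻¹) := by
      rw [Real.log_inv, Real.log_pow, hc]
      push_cast
      field_simp
      ring_nf
    rw [h1, Real.exp_log (by positivity)]
  have key : ∀ z : ℝ, Real.exp (a / 2 * φ z) ≤ 1 + ε * Real.exp (a * z) := by
    intro z
    by_cases h : c < z
    · have hφz : φ z = z := if_pos h
      rw [hφz]
      have h1 : a / 2 * z = a * z + (-(a / 2) * z) := by ring
      rw [h1, Real.exp_add]
      have h2 : Real.exp (-(a / 2) * z) ≤ ε := by
        rw [← hεexp]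
        apply Real.exp_le_exp.2
        nlinarith [h.le]
      calc Real.exp (a * z) * Real.exp (-(a / 2) * z) ≤ Real.exp (a * z) * ε :=
            mul_le_mul_of_nonneg_left h2 (Real.exp_pos _).le
        _ = ε * Real.exp (a * z) := by ring
        _ ≤ 1 + ε * Real.exp (a * z) := by linarith
    · have hφz : φ z = 0 := if_neg h
      rw [hφz, mul_zero, Real.exp_zero]
      have : 0 ≤ ε * Real.exp (a * z) := mul_nonneg hε0 (Real.exp_pos _).le
      linarith
  -- integrability of exp(a * W l)
  have hint0 : Integrable (fun ω => Real.exp (a * W i0 ω)) P :=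
    hint.congr ((hWeq i0).fun_comp fun z => Real.exp (a * z))
  have hexpASM : ∀ (ν : Measure ℝ), AEStronglyMeasurable (fun z => Real.exp (a * z)) ν :=
    fun ν => (measurable_exp.comp (measurable_const.mul measurable_id)).aestronglyMeasurable
  have hintW : ∀ l, Integrable (fun ω => Real.exp (a * W l ω)) P := by
    intro l
    have h1 : Integrable (fun z => Real.exp (a * z)) (Measure.map (W l) P) := by
      rw [hmapW l, integrable_map_measure (hexpASM _) (hWmeas i0).aemeasurable]
      exact hint0
    rw [integrable_map_measure (hexpASM _) (hWmeas l).aemeasurable] at h1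
    exact h1
  -- integrability of exp((a/2) * Y l)
  have hintY : ∀ l, Integrable (fun ω => Real.exp (a / 2 * Y l ω)) P := by
    intro l
    refine Integrable.mono' ((integrable_const 1).add ((hintW l).const_mul ε)) ?_ ?_
    · exact (measurable_exp.comp ((hYmeas l).const_mul (a / 2))).aestronglyMeasurable
    · refine Filter.Eventually.of_forall fun ω => ?_
      rw [Real.norm_eq_abs, abs_of_pos (Real.exp_pos _)]
      exact key (W l ω)
  -- mgf of each Y l is bounded
  have hMl : ∀ l, (∫ ω, Real.exp (a * W l ω) ∂P) = M := by
    intro l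
    rw [← integral_map (hWmeas l).aemeasurable (hexpASM _), hmapW l,
      integral_map (hWmeas i0).aemeasurable (hexpASM _)]
    exact integral_congr_ae (((hWeq i0).fun_comp fun z => Real.exp (a * z)).symm)
  have hmgf : ∀ l, mgf (Y l) P (a / 2) ≤ 1 + ε * M := by
    intro l
    have h1 : mgf (Y l) P (a / 2) ≤ ∫ ω, (1 + ε * Real.exp (a * W l ω)) ∂P := by
      refine integral_mono (hintY l) ((integrable_const 1).add ((hintW l).const_mul ε))
        fun ω => key (W l ω)
    rw [integral_add (integrable_const 1) ((hintW l).const_mul ε), integral_const,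
      integral_const_mul, hMl l] at h1
    simpa using h1
  -- Chernoff
  have hintS : Integrable (fun ω => Real.exp (a / 2 * (∑ l, Y l) ω)) P :=
    hindepY.integrable_exp_mul_sum hYmeas fun l _ => hintY l
  have hcher := measure_ge_le_exp_mul_mgf (μ := P) (X := ∑ l, Y l) x
    (by positivity : (0:ℝ) ≤ a / 2) hintS
  have hsum : mgf (∑ l, Y l) P (a / 2) ≤ 2 := by
    rw [hindepY.mgf_sum hYmeas]
    calc ∏ l, mgf (Y l) P (a / 2) ≤ ∏ _l : Fin (r ^ 2), (1 + ε * M) :=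
          Finset.prod_le_prod (fun l _ => mgf_nonneg) (fun l _ => hmgf l)
      _ = (1 + ε * M) ^ (r ^ 2) := by rw [Finset.prod_const, Finset.card_univ, Fintype.card_fin]
      _ ≤ (Real.exp (ε * M)) ^ (r ^ 2) := by
          refine pow_le_pow_left₀ (by positivity) ?_ _
          have := Real.add_one_le_exp (ε * M)
          linarith
      _ = Real.exp ((r ^ 2 : ℕ) * (ε * M)) := by rw [Real.exp_nat_mul]
      _ ≤ Real.exp (Real.log 2) := by
          apply Real.exp_le_exp.2
          have h2 : ((r : ℝ) ^ 2) * (ε * M) = M / r := by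
            rw [hεdef]; field_simp
          push_cast
          rw [h2]
          rw [div_le_iff₀ hrpos]
          calc M ≤ (r : ℝ) * Real.log 2 := hMr
            _ = Real.log 2 * r := by ring
      _ = 2 := Real.exp_log (by norm_num)
  -- relate original set to Y-sum set
  have haeS : ∀ᵐ ω ∂P,
      (∑ l, Set.indicator {ω' | (6 / a) * Real.log r < Z l ω'} (Z l) ω) = (∑ l, Y l) ω := by
    have hball : ∀ᵐ ω ∂P, ∀ l, Z l ω = W l ω := ae_all_iff.2 hWeq
    filter_upwards [hball] with ω hω
    rw [Finset.sum_apply]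
    refine Finset.sum_congr rfl fun l _ => ?_
    simp only [Set.indicator_apply, Set.mem_setOf_eq, hYdef, Function.comp_apply, hφdef, hc,
      hω l]
  have hPeq : P {ω | x < ∑ l, Set.indicator {ω' | (6 / a) * Real.log r < Z l ω'} (Z l) ω}
      = P {ω | x < (∑ l, Y l) ω} := by
    refine measure_congr ?_
    filter_upwards [haeS] with ω hω
    change (x < ∑ l, Set.indicator {ω' | (6 / a) * Real.log r < Z l ω'} (Z l) ω)
      = (x < (∑ l, Y l) ω)
    rw [hω]
  have hmono : (P {ω | x < (∑ l, Y l) ω}).toReal ≤ (P {ω | x ≤ (∑ l, Y l) ω}).toReal := by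
    refine ENNReal.toReal_mono (measure_ne_top _ _) (measure_mono (Set.setOf_subset_setOf.2 fun ω h => le_of_lt h))
  calc (P {ω | x < ∑ l, Set.indicator {ω' | (6 / a) * Real.log r < Z l ω'} (Z l) ω}).toReal
      = (P {ω | x < (∑ l, Y l) ω}).toReal := by rw [hPeq]
    _ ≤ (P {ω | x ≤ (∑ l, Y l) ω}).toReal := hmono
    _ ≤ Real.exp (-(a / 2) * x) * mgf (∑ l, Y l) P (a / 2) := hcher
    _ ≤ Real.exp (-(a / 2) * x) * 2 :=
        mul_le_mul_of_nonneg_left hsum (Real.exp_pos _).le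
    _ = 2 * Real.exp (-(a / 2) * x) := by ring
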